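/- Let g be continuous, decreasing, with g(1)=0 and g(y)>0 for y<1, and let v be a solution of v' = (1+v²)g(v/r) defined on all of [r₀,∞) with v > 0. Then for every ε ∈ (0,1), v(r) ≥ (1-ε)r for all sufficiently large r. Consequently v(r) = r + o(r) as r → ∞ (combined with v ≤ r). -/

import Mathlib

open Filter

/-- Sub-solution (1-ε)r: a global positive solution of v' = (1+v²)g(v/r)
eventually lies above (1-ε)r; combined with v ≤ r this gives v = r + o(r). -/
theorem stmt5 (g : ℝ → ℝ) (hg : Continuous g) (hanti : StrictAnti g)
    (hg1 : g 1 = 0) (hgpos : ∀ y : ℝ, y < 1 → 0 < g y)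
    (r₀ : ℝ) (hr₀ : 0 < r₀) (v : ℝ → ℝ)
    (hode : ∀ r : ℝ, r₀ ≤ r → HasDerivAt v ((1 + (v r) ^ 2) * g (v r / r)) r)
    (hvpos : ∀ r : ℝ, r₀ ≤ r → 0 < v r) :
    (∀ ε : ℝ, 0 < ε → ε < 1 → ∀ᶠ r in atTop, (1 - ε) * r ≤ v r) ∧
    ((∀ r : ℝ, r₀ ≤ r → v r ≤ r) →
      (fun r => v r - r) =o[atTop] (fun r : ℝ => r)) := by
  have key : ∀ ε : ℝ, 0 < ε → ε < 1 → ∀ᶠ r in atTop, (1 - ε) * r ≤ v r := by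
    intro ε hε hε1
    have h1ε : (0:ℝ) < 1 - ε := by linarith
    set C := g (1 - ε) with hCdef
    have hCpos : 0 < C := hgpos _ (by linarith)
    -- derivative of arctan ∘ v
    have hvD : ∀ r, r₀ ≤ r → HasDerivAt (fun t => Real.arctan (v t)) (g (v r / r)) r := by
      intro r hr
      have h := (Real.hasDerivAt_arctan (v r)).comp r (hode r hr)
      refine h.congr_deriv ?_
      have h0 : (1 + (v r)^2) ≠ 0 := by positivity
      field_simp
    set R₁ := max r₀ ((1-ε)⁻¹ * (Real.sqrt C)⁻¹) with hR₁
    have hR₁r₀ : r₀ ≤ R₁ := le_max_left _ _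
    have hR₁pos : 0 < R₁ := lt_of_lt_of_le hr₀ hR₁r₀
    have hsC : 0 < Real.sqrt C := Real.sqrt_pos.2 hCpos
    have hsq : ∀ s, R₁ ≤ s → 1 ≤ (1-ε)^2 * s^2 * C := by
      intro s hs
      have h2 : (1-ε)⁻¹ * (Real.sqrt C)⁻¹ ≤ s := le_trans (le_max_right _ _) hs
      have h3 : 1 ≤ (1-ε) * s * Real.sqrt C := by
        have hpos := mul_pos h1ε hsC
        calc (1:ℝ) = (1-ε)*Real.sqrt C * ((1-ε)⁻¹*(Real.sqrt C)⁻¹) := by field_simp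
          _ ≤ (1-ε)*Real.sqrt C * s := by
              exact mul_le_mul_of_nonneg_left h2 hpos.le
          _ = (1-ε)*s*Real.sqrt C := by ring
      have h4 : 1 ≤ ((1-ε)*s*Real.sqrt C)^2 := by nlinarith [h3]
      have heq : ((1-ε)*s*Real.sqrt C)^2 = (1-ε)^2*s^2*C := by
        rw [mul_pow, mul_pow, Real.sq_sqrt hCpos.le]
      linarith [heq ▸ h4]
    -- blow-up: there is a point above the line beyond any R
    have exists_above : ∀ R, R₁ ≤ R → ∃ r₂, R ≤ r₂ ∧ (1-ε)*r₂ ≤ v r₂ := by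
      intro R hR
      by_contra hcon
      push_neg at hcon
      have hRr₀ : r₀ ≤ R := le_trans hR₁r₀ hR
      have hRpos : 0 < R := lt_of_lt_of_le hR₁pos hR
      have hder : ∀ r ∈ interior (Set.Ici R), C ≤ deriv (fun t => Real.arctan (v t)) r := by
        intro r hr
        rw [interior_Ici] at hr
        have hrR : R ≤ r := le_of_lt hr
        have hrr₀ : r₀ ≤ r := le_trans hRr₀ hrR
        rw [(hvD r hrr₀).deriv]
        have hrpos : 0 < r := lt_of_lt_of_le hRpos hrR
        have hlt : v r / r < 1 - ε := by
          rw [div_lt_iff₀ hrpos]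
          have := hcon r hrR
          linarith [this]
        exact le_of_lt (hanti hlt)
      have hcont : ContinuousOn (fun t => Real.arctan (v t)) (Set.Ici R) :=
        fun r hr => ((hvD r (le_trans hRr₀ hr)).continuousAt.continuousWithinAt)
      have hdiff : DifferentiableOn ℝ (fun t => Real.arctan (v t)) (interior (Set.Ici R)) := by
        intro r hr
        rw [interior_Ici] at hr
        exact ((hvD r (le_trans hRr₀ (le_of_lt hr))).differentiableAt).differentiableWithinAt
      have hm := (convex_Ici R).mul_sub_le_image_sub_of_le_deriv hcont hdiff hder
      set y := R + (Real.pi + 1)/C with hy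
      have hyR : R ≤ y := by
        have h0 : 0 < (Real.pi + 1)/C := by positivity
        rw [hy]; linarith
      have hmy := hm R Set.self_mem_Ici y (Set.mem_Ici.2 hyR) hyR
      have hCy : C * (y - R) = Real.pi + 1 := by
        rw [hy]; field_simp; ring
      have hb1 := Real.arctan_lt_pi_div_two (v y)
      have hb2 := Real.neg_pi_div_two_lt_arctan (v R)
      nlinarith [hmy, hb1, hb2]
    -- persistence above the line
    have pers : ∀ r₂ r₃, R₁ ≤ r₂ → r₂ ≤ r₃ → (1-ε)*r₂ ≤ v r₂ → (1-ε)*r₃ ≤ v r₃ := by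
      intro r₂ r₃ hr₂ h23 hv₂
      by_contra hcon
      push_neg at hcon
      set φ : ℝ → ℝ := fun r => v r - (1-ε)*r with hφ
      have hφD : ∀ r, r₀ ≤ r →
          HasDerivAt φ ((1 + (v r)^2)*g (v r / r) - (1-ε)) r := by
        intro r hr
        have h1 : HasDerivAt (fun t : ℝ => (1-ε)*t) (1-ε) r := by
          simpa using (hasDerivAt_id r).const_mul (1-ε)
        exact (hode r hr).sub h1
      have hr₂r₀ : r₀ ≤ r₂ := le_trans hR₁r₀ hr₂
      set S := {r | r ∈ Set.Icc r₂ r₃ ∧ 0 ≤ φ r} with hS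
      have hScl : IsClosed S := by
        have hcont : ContinuousOn φ (Set.Icc r₂ r₃) :=
          fun r hr => (hφD r (le_trans hr₂r₀ hr.1)).continuousAt.continuousWithinAt
        have := hcont.preimage_isClosed_of_isClosed isClosed_Icc (isClosed_Ici (a := (0:ℝ)))
        convert this using 1
        rfl
      have hne : S.Nonempty := ⟨r₂, ⟨le_refl _, h23⟩, by simp only [hφ]; linarith⟩
      have hbdd : BddAbove S := ⟨r₃, fun x hx => hx.1.2⟩
      set s := sSup S with hs
      have hsS : s ∈ S := hScl.csSup_mem hne hbdd
      have hs2 : r₂ ≤ s := hsS.1.1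
      have hs3' : s ≤ r₃ := hsS.1.2
      have hφs0 : 0 ≤ φ s := hsS.2
      have hφr₃ : φ r₃ < 0 := by simp only [hφ]; linarith
      have hs3 : s < r₃ := by
        rcases hs3'.lt_or_eq with h | h
        · exact h
        · exfalso; rw [h] at hφs0; linarith
      have hneg : ∀ r, s < r → r ≤ r₃ → φ r < 0 := by
        intro r h1 h2
        by_contra h
        push_neg at h
        exact absurd (le_csSup hbdd ⟨⟨le_trans hs2 h1.le, h2⟩, h⟩) (not_le.2 h1)
      have hsr₀ : r₀ ≤ s := le_trans hr₂r₀ hs2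
      have hφs_le : φ s ≤ 0 := by
        have hct : ContinuousAt φ s := (hφD s hsr₀).continuousAt
        have ht : Tendsto φ (nhdsWithin s (Set.Ioi s)) (nhds (φ s)) :=
          hct.continuousWithinAt.tendsto
        have hev : ∀ᶠ r in nhdsWithin s (Set.Ioi s), φ r ≤ 0 := by
          filter_upwards [Ioo_mem_nhdsGT_of_mem ⟨le_refl s, hs3⟩] with r hr
          exact (hneg r hr.1 hr.2.le).le
        exact le_of_tendsto ht hev
      have hφs : φ s = 0 := le_antisymm hφs_le hφs0
      have hvs : v s = (1-ε)*s := by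
        have : v s - (1-ε)*s = 0 := hφs
        linarith
      have hspos : 0 < s := lt_of_lt_of_le (lt_of_lt_of_le hR₁pos hr₂) hs2
      have hq : v s / s = 1 - ε := by rw [hvs]; field_simp
      set d := (1 + (v s)^2)*C - (1-ε) with hd
      have hdD : HasDerivAt φ d s := by
        have := hφD s hsr₀
        rwa [hq] at this
      have hdpos : 0 < d := by
        have h1 := hsq s (le_trans hr₂ hs2)
        have h2 : (v s)^2 = (1-ε)^2*s^2 := by rw [hvs]; ring
        nlinarith [hCpos]
      have hslope : Tendsto (slope φ s) (nhdsWithin s (Set.Ioi s)) (nhds d) :=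
        (hasDerivAt_iff_tendsto_slope.1 hdD).mono_left
          (nhdsWithin_mono s (fun r hr => (Set.mem_Ioi.1 hr).ne'))
      have hev1 : ∀ᶠ r in nhdsWithin s (Set.Ioi s), 0 < slope φ s r :=
        hslope.eventually (eventually_gt_nhds hdpos)
      have hev2 : (Set.Ioo s r₃) ∈ nhdsWithin s (Set.Ioi s) :=
        Ioo_mem_nhdsGT_of_mem ⟨le_refl s, hs3⟩
      obtain ⟨r, hrs, hrIoo⟩ := (hev1.and (eventually_of_mem hev2 fun x hx => hx)).exists
      have hrgt : s < r := hrIoo.1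
      have hφr : φ r < 0 := hneg r hrgt hrIoo.2.le
      have : 0 < φ r - φ s := by
        have hsl : slope φ s r = (φ r - φ s) / (r - s) := slope_def_field φ s r
        rw [hsl] at hrs
        have hrs' : 0 < r - s := by linarith
        rcases div_pos_iff.1 hrs with ⟨h, _⟩ | ⟨_, h2⟩
        · exact h
        · linarith
      linarith [hφs ▸ this]
    obtain ⟨r₂, hr₂, hv₂⟩ := exists_above R₁ le_rfl
    filter_upwards [eventually_ge_atTop r₂] with r hr
    exact pers r₂ r hr₂ hr hv₂
  refine ⟨key, fun hle => ?_⟩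
  rw [Asymptotics.isLittleO_iff]
  intro c hc
  set ε := min c (1/2) with hε
  have hε0 : 0 < ε := lt_min hc (by norm_num)
  have hε1 : ε < 1 := lt_of_le_of_lt (min_le_right _ _) (by norm_num)
  filter_upwards [key ε hε0 hε1, eventually_ge_atTop r₀, eventually_gt_atTop (0:ℝ)]
    with r h1 h2 h3
  have hle' := hle r h2
  rw [Real.norm_eq_abs, Real.norm_eq_abs, abs_of_nonneg h3.le,
    abs_of_nonpos (by linarith)]
  have hεc : ε ≤ c := min_le_left _ _
  nlinarith [h1, h3]
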